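/- arXiv:2306.05815 — 4 statements merged into one kernel-verified Lean document; each statement's English description precedes it below -/
import Mathlib

section
/- Let U and K be real Hilbert spaces, let f : K → ℝ be a convex continuous function, let g : U → ℝ ∪ {+∞} be a proper, convex, lower semicontinuous function whose Fenchel conjugate g⋆ is finite-valued on all of U, and let Γ : U → K be a bounded linear operator with adjoint Γ♯. Then the following equality of infima holds in the extended reals: inf_{W ∈ U} ( g(W) − f(ΓW) ) = inf_{H ∈ K} ( f⋆(H) − g⋆(Γ♯H) ). -/
open scoped RealInnerProductSpace

/-- Fenchel conjugate of an extended-real-valued function on a real inner product space. -/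
noncomputable def fenchelConj {E : Type*} [NormedAddCommGroup E] [InnerProductSpace ℝ E]
    (h : E → EReal) (y : E) : EReal :=
  ⨆ x : E, ((⟪y, x⟫ : ℝ) : EReal) - h x

lemma exists_subgradient {K : Type*} [NormedAddCommGroup K] [InnerProductSpace ℝ K]
    [CompleteSpace K] (f : K → ℝ) (hc : ConvexOn ℝ Set.univ f) (hct : Continuous f) (x : K) :
    ∃ H : K, ∀ y : K, ⟪H, y⟫ - f y ≤ ⟪H, x⟫ - f x := by
  set S : Set (K × ℝ) := {p | f p.1 < p.2} with hS
  have hSconv : Convex ℝ S := by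
    rintro ⟨p1, p2⟩ hp ⟨q1, q2⟩ hq a b ha hb hab
    simp only [hS, Set.mem_setOf_eq] at hp hq ⊢
    have h1 := hc.2 (Set.mem_univ p1) (Set.mem_univ q1) ha hb hab
    simp only [smul_eq_mul, Prod.smul_mk, Prod.mk_add_mk] at h1 ⊢
    calc f (a • p1 + b • q1) ≤ a * f p1 + b * f q1 := h1
      _ < a * p2 + b * q2 := by
          rcases eq_or_lt_of_le ha with ha0 | ha0
          · have hb1 : b = 1 := by linarith
            rw [← ha0, hb1]; simpa using hq
          · nlinarith [mul_le_mul_of_nonneg_left hq.le hb, mul_lt_mul_of_pos_left hp ha0]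
  have hSopen : IsOpen S := isOpen_lt (hct.comp continuous_fst) continuous_snd
  have hxS : (x, f x) ∉ S := by simp [hS]
  obtain ⟨φ, hφ⟩ := geometric_hahn_banach_open_point hSconv hSopen hxS
  set c : ℝ := φ (0, 1) with hcdef
  have hdec : ∀ (y : K) (t : ℝ), φ (y, t) = φ (y, 0) + t * c := by
    intro y t
    have h0 : (y, t) = (y, (0:ℝ)) + t • ((0:K), (1:ℝ)) := by
      simp [Prod.ext_iff]
    rw [h0, map_add, map_smul, smul_eq_mul, hcdef]
  have hc_neg : c < 0 := by
    have h1 := hφ (x, f x + 1) (by simp [hS])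
    rw [hdec x (f x + 1), hdec x (f x)] at h1
    linarith
  have key : ∀ y : K, φ (y, 0) + c * f y ≤ φ (x, 0) + c * f x := by
    intro y
    by_contra hlt
    push_neg at hlt
    set gap : ℝ := φ (y, 0) + c * f y - (φ (x, 0) + c * f x) with hgap
    have hgap_pos : 0 < gap := by simp only [hgap]; linarith
    set δ : ℝ := gap / (-c) / 2 with hδdef
    have hδ : 0 < δ := by
      apply div_pos (div_pos hgap_pos (by linarith)) two_pos
    have hmem : (y, f y + δ) ∈ S := by simp [hS]; linarith
    have h1 := hφ _ hmem
    rw [hdec y (f y + δ), hdec x (f x)] at h1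
    have hc0 : c ≠ 0 := ne_of_lt hc_neg
    have hδc : δ * (-c) = gap / 2 := by
      rw [hδdef]; field_simp
    nlinarith
  set L : K →L[ℝ] ℝ := φ.comp (ContinuousLinearMap.inl ℝ K ℝ) with hL
  have hLapp : ∀ y : K, L y = φ (y, 0) := fun y => rfl
  refine ⟨(InnerProductSpace.toDual ℝ K).symm ((-c)⁻¹ • L), fun y => ?_⟩
  have hinner : ∀ z : K,
      ⟪(InnerProductSpace.toDual ℝ K).symm ((-c)⁻¹ • L), z⟫ = (-c)⁻¹ * φ (z, 0) := by
    intro z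
    rw [InnerProductSpace.toDual_symm_apply]
    simp [hLapp]
  rw [hinner y, hinner x]
  have h2 : φ (y, 0) - φ (x, 0) ≤ c * (f x - f y) := by
    have := key y; ring_nf; ring_nf at this; linarith
  have hcpos : 0 < -c := by linarith
  have h3 : (-c)⁻¹ * (φ (y, 0) - φ (x, 0)) ≤ (-c)⁻¹ * (c * (f x - f y)) :=
    mul_le_mul_of_nonneg_left h2 (le_of_lt (inv_pos.mpr hcpos))
  have h4 : (-c)⁻¹ * (c * (f x - f y)) = f y - f x := by
    rw [inv_neg, ← mul_assoc, neg_mul, inv_mul_cancel₀ (ne_of_lt hc_neg)]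
    ring
  rw [h4] at h3
  linarith [mul_sub ((-c)⁻¹) (φ (y,0)) (φ (x,0))]

/-- Dual of a difference of convex functions (Toland duality):
`inf_W (g W − f (Γ W)) = inf_H (f⋆ H − g⋆ (Γ♯ H))`. -/
theorem dc_duality
    {U K : Type*} [NormedAddCommGroup U] [InnerProductSpace ℝ U] [CompleteSpace U]
    [NormedAddCommGroup K] [InnerProductSpace ℝ K] [CompleteSpace K]
    (f : K → ℝ) (hf_convex : ConvexOn ℝ Set.univ f) (hf_cont : Continuous f)
    (g : U → EReal)
    (hg_proper_ne_top : ∃ x : U, g x ≠ ⊤)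
    (hg_proper_ne_bot : ∀ x : U, g x ≠ ⊥)
    (hg_convex : ∀ x y : U, ∀ a b : ℝ, 0 ≤ a → 0 ≤ b → a + b = 1 →
      g (a • x + b • y) ≤ (a : EReal) * g x + (b : EReal) * g y)
    (hg_lsc : LowerSemicontinuous g)
    (hgstar_finite : ∀ y : U, ∃ r : ℝ, fenchelConj g y = (r : EReal))
    (Γ : U →L[ℝ] K) :
    (⨅ W : U, g W - ((f (Γ W) : ℝ) : EReal)) =
      ⨅ H : K, fenchelConj (fun x : K => ((f x : ℝ) : EReal)) H
        - fenchelConj g ((ContinuousLinearMap.adjoint Γ) H) := by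
  set fs : K → EReal := fun x => ((f x : ℝ) : EReal) with hfs
  -- basic fact: each term is below the conjugate of f
  have hA : ∀ (H z : K), ((⟪H, z⟫ - f z : ℝ) : EReal) ≤ fenchelConj fs H := by
    intro H z
    have := le_iSup (fun z : K => ((⟪H, z⟫ : ℝ) : EReal) - fs z) z
    simpa [fenchelConj, hfs, EReal.coe_sub] using this
  have hAg : ∀ (y : U) (W : U), ((⟪y, W⟫ : ℝ) : EReal) - g W ≤ fenchelConj g y := by
    intro y W
    exact le_iSup (fun W : U => ((⟪y, W⟫ : ℝ) : EReal) - g W) W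
  have hFbot : ∀ H : K, fenchelConj fs H ≠ ⊥ := by
    intro H h
    have := hA H 0
    rw [h] at this
    exact absurd this (by simp)
  apply le_antisymm
  · -- LHS ≤ RHS : show LHS ≤ each term of the right infimum
    apply le_iInf
    intro H
    obtain ⟨r, hr⟩ := hgstar_finite ((ContinuousLinearMap.adjoint Γ) H)
    by_cases hFH : fenchelConj fs H = ⊤
    · rw [hFH, hr, EReal.top_sub_coe]; exact le_top
    · have hFc : fenchelConj fs H = ((fenchelConj fs H).toReal : EReal) :=
        (EReal.coe_toReal hFH (hFbot H)).symm
      set a : ℝ := (fenchelConj fs H).toReal with ha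
      rw [hFc, hr]
      by_contra hcon
      push_neg at hcon
      rw [← EReal.coe_sub] at hcon
      obtain ⟨cE, h1, h2⟩ := exists_between hcon
      have hcEtop : cE ≠ ⊤ := ne_top_of_lt h2
      have hcEbot : cE ≠ ⊥ := ne_bot_of_gt h1
      have hcE : cE = ((cE.toReal : ℝ) : EReal) := (EReal.coe_toReal hcEtop hcEbot).symm
      set b : ℝ := cE.toReal with hb
      rw [hcE] at h1
      have hab : a - r < b := EReal.coe_lt_coe_iff.mp h1
      set ε : ℝ := b - (a - r) with hε
      have hεpos : 0 < ε := by simp only [hε]; linarith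
      have hlt : ((r - ε : ℝ) : EReal) < fenchelConj g ((ContinuousLinearMap.adjoint Γ) H) := by
        rw [hr]; exact_mod_cast (by linarith : r - ε < r)
      rw [fenchelConj, lt_iSup_iff] at hlt
      obtain ⟨W, hW⟩ := hlt
      have hgWtop : g W ≠ ⊤ := by
        intro h
        rw [h, EReal.sub_top] at hW
        exact absurd hW (by simp)
      have hgWc : g W = (((g W).toReal : ℝ) : EReal) :=
        (EReal.coe_toReal hgWtop (hg_proper_ne_bot W)).symm
      set s : ℝ := (g W).toReal with hs
      rw [hgWc, ← EReal.coe_sub] at hW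
      have hW' : r - ε < ⟪(ContinuousLinearMap.adjoint Γ) H, W⟫ - s :=
        EReal.coe_lt_coe_iff.mp hW
      have hadj : ⟪(ContinuousLinearMap.adjoint Γ) H, W⟫ = ⟪H, Γ W⟫ :=
        ContinuousLinearMap.adjoint_inner_left Γ W H
      have hfa : ⟪H, Γ W⟫ - f (Γ W) ≤ a := by
        have := hA H (Γ W)
        rw [hFc] at this
        exact_mod_cast this
      have hterm : g W - ((f (Γ W) : ℝ) : EReal) ≤ cE := by
        rw [hgWc, ← EReal.coe_sub, hcE]
        apply EReal.coe_le_coe_iff.mpr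
        rw [hadj] at hW'
        simp only [hε] at *
        linarith
      exact absurd (lt_of_le_of_lt
        (le_trans (iInf_le (fun W : U => g W - ((f (Γ W) : ℝ) : EReal)) W) hterm) h2)
        (lt_irrefl _)
  · -- RHS ≤ LHS
    apply le_iInf
    intro W
    by_cases hgW : g W = ⊤
    · rw [hgW, EReal.top_sub_coe]; exact le_top
    · have hgWc : g W = (((g W).toReal : ℝ) : EReal) :=
        (EReal.coe_toReal hgW (hg_proper_ne_bot W)).symm
      set s : ℝ := (g W).toReal with hs
      obtain ⟨H, hH⟩ := exists_subgradient f hf_convex hf_cont (Γ W)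
      have hFH : fenchelConj fs H = ((⟪H, Γ W⟫ - f (Γ W) : ℝ) : EReal) := by
        apply le_antisymm
        · apply iSup_le
          intro z
          simp only [hfs, ← EReal.coe_sub]
          exact_mod_cast hH z
        · exact hA H (Γ W)
      obtain ⟨r, hr⟩ := hgstar_finite ((ContinuousLinearMap.adjoint Γ) H)
      have hrge : ⟪(ContinuousLinearMap.adjoint Γ) H, W⟫ - s ≤ r := by
        have := hAg ((ContinuousLinearMap.adjoint Γ) H) W
        rw [hr, hgWc, ← EReal.coe_sub] at this
        exact_mod_cast this
      have hadj : ⟪(ContinuousLinearMap.adjoint Γ) H, W⟫ = ⟪H, Γ W⟫ :=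
        ContinuousLinearMap.adjoint_inner_left Γ W H
      refine le_trans (iInf_le _ H) ?_
      rw [hFH, hr, ← EReal.coe_sub, hgWc, ← EReal.coe_sub]
      apply EReal.coe_le_coe_iff.mpr
      rw [hadj] at hrge
      linarith
end

section
/- Let 𝓗 be a real Hilbert space, v₁,…,vₙ ∈ 𝓗 with positive definite Gram matrix G ∈ ℝ^{n×n}, G_{ij} = ⟨vᵢ, vⱼ⟩, and let H ∈ ℝ^{n×s}. Then the supremum of Σ_{j=1}^s ⟨ Σ_{i=1}^n H_{ij} vᵢ , wⱼ ⟩ over all W = (w₁,…,wₛ) ∈ 𝓗ˢ with 𝒢(W) ⪯ I_s equals the supremum of Tr(Aᵀ G H) over all A ∈ ℝ^{n×s} with Aᵀ G A ⪯ I_s; that is, the maximization over directions in 𝓗 reduces to a maximization over coefficient matrices A, where W corresponds to wⱼ = Σ_{i=1}^n A_{ij} vᵢ. -/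
open scoped RealInnerProductSpace Matrix

/-- The Gram matrix `𝒢(W)` of a tuple `W = (w₁, …, wₛ)` of vectors of a real Hilbert space. -/
noncomputable def gram {𝓗 : Type*} [NormedAddCommGroup 𝓗] [InnerProductSpace ℝ 𝓗]
    {s : ℕ} (W : Fin s → 𝓗) : Matrix (Fin s) (Fin s) ℝ :=
  Matrix.of fun i j => ⟪W i, W j⟫

section aux
variable {𝓗 : Type*} [NormedAddCommGroup 𝓗] [InnerProductSpace ℝ 𝓗] {n s : ℕ}

lemma gram_comb (v : Fin n → 𝓗) (A : Matrix (Fin n) (Fin s) ℝ) :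
    gram (fun j => ∑ i, A i j • v i)
      = Aᵀ * (Matrix.of fun i j => ⟪v i, v j⟫) * A := by
  ext j k
  simp only [gram, Matrix.of_apply, Matrix.mul_apply, Matrix.transpose_apply,
    inner_sum, sum_inner, real_inner_smul_left, real_inner_smul_right,
    Finset.mul_sum, Finset.sum_mul]
  apply Finset.sum_congr rfl; intro i _
  apply Finset.sum_congr rfl; intro i' _
  ring

lemma quad_gram (W : Fin s → 𝓗) (x : Fin s → ℝ) :
    x ⬝ᵥ (gram W) *ᵥ x = ⟪∑ j, x j • W j, ∑ j, x j • W j⟫ := by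
  simp only [gram, dotProduct, Matrix.mulVec, Matrix.of_apply,
    inner_sum, sum_inner, real_inner_smul_left, real_inner_smul_right, dotProduct]
  apply Finset.sum_congr rfl; intro j _
  rw [Finset.mul_sum]
  apply Finset.sum_congr rfl; intro k _
  rw [real_inner_comm]; ring

lemma gram_isHermitian (W : Fin s → 𝓗) : (gram W).IsHermitian := by
  ext i j
  simp [gram, Matrix.conjTranspose_apply, real_inner_comm]

lemma value_comb (v : Fin n → 𝓗) (A H : Matrix (Fin n) (Fin s) ℝ) :
    ∑ j : Fin s, ⟪∑ i : Fin n, H i j • v i, ∑ i : Fin n, A i j • v i⟫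
      = (Aᵀ * (Matrix.of fun i k : Fin n => ⟪v i, v k⟫) * H).trace := by
  simp only [Matrix.trace, Matrix.diag, Matrix.mul_apply, Matrix.transpose_apply,
    Matrix.of_apply, inner_sum, sum_inner, real_inner_smul_left, real_inner_smul_right,
    Finset.sum_mul, Finset.mul_sum]
  apply Finset.sum_congr rfl; intro j _
  rw [Finset.sum_comm]
  apply Finset.sum_congr rfl; intro i _
  apply Finset.sum_congr rfl; intro k _
  rw [real_inner_comm]; ring

end aux

/-- For `G` the (positive definite) Gram matrix of `v₁, …, vₙ`, the maximization of
`Σⱼ ⟨Σᵢ H_{ij} vᵢ, wⱼ⟩` over `{W : 𝒢(W) ⪯ Iₛ}` reduces to the maximization of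
`Tr(Aᵀ G H)` over coefficient matrices `A` with `Aᵀ G A ⪯ Iₛ`. -/
theorem sup_hilbert_eq_sup_coeff
    {𝓗 : Type*} [NormedAddCommGroup 𝓗] [InnerProductSpace ℝ 𝓗]
    {n s : ℕ} (v : Fin n → 𝓗)
    (G : Matrix (Fin n) (Fin n) ℝ) (hGdef : G = Matrix.of fun i j => ⟪v i, v j⟫)
    (hG : G.PosDef) (H : Matrix (Fin n) (Fin s) ℝ) :
    (⨆ W : {W : Fin s → 𝓗 // ((1 : Matrix (Fin s) (Fin s) ℝ) - gram W).PosSemidef},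
        ∑ j : Fin s, ⟪∑ i : Fin n, H i j • v i, (W : Fin s → 𝓗) j⟫) =
    (⨆ A : {A : Matrix (Fin n) (Fin s) ℝ //
        ((1 : Matrix (Fin s) (Fin s) ℝ)
          - (A : Matrix (Fin n) (Fin s) ℝ)ᵀ * G * (A : Matrix (Fin n) (Fin s) ℝ)).PosSemidef},
      ((A : Matrix (Fin n) (Fin s) ℝ)ᵀ * G * H).trace) := by
  have hdet : IsUnit G.det := hG.det_pos.ne'.isUnit
  have hGsym : Gᵀ = G := by
    ext i j
    have := congrFun (congrFun hG.1 i) j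
    simpa [Matrix.conjTranspose_apply] using this
  have key : Set.range
      (fun W : {W : Fin s → 𝓗 // ((1 : Matrix (Fin s) (Fin s) ℝ) - gram W).PosSemidef} =>
        ∑ j : Fin s, ⟪∑ i : Fin n, H i j • v i, (W : Fin s → 𝓗) j⟫)
      = Set.range
      (fun A : {A : Matrix (Fin n) (Fin s) ℝ //
          ((1 : Matrix (Fin s) (Fin s) ℝ)
            - (A : Matrix (Fin n) (Fin s) ℝ)ᵀ * G * (A : Matrix (Fin n) (Fin s) ℝ)).PosSemidef} =>
        ((A : Matrix (Fin n) (Fin s) ℝ)ᵀ * G * H).trace) := by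
    ext r
    simp only [Set.mem_range, Subtype.exists]
    constructor
    · rintro ⟨W, hW, rfl⟩
      set M : Matrix (Fin n) (Fin s) ℝ := Matrix.of fun i j => ⟪v i, W j⟫ with hM
      set A : Matrix (Fin n) (Fin s) ℝ := G⁻¹ * M with hA
      have hGA : G * A = M := Matrix.mul_nonsing_inv_cancel_left G M hdet
      have hAtG : Aᵀ * G = Mᵀ := by
        rw [hA, Matrix.transpose_mul, Matrix.transpose_nonsing_inv, hGsym,
          Matrix.nonsing_inv_mul_cancel_right _ _ hdet]
      set P : Fin s → 𝓗 := fun j => ∑ i, A i j • v i with hP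
      have hproj : ∀ k j, ⟪v k, P j⟫ = ⟪v k, W j⟫ := by
        intro k j
        have h1 : ⟪v k, P j⟫ = (G * A) k j := by
          simp only [hP, inner_sum, real_inner_smul_right, Matrix.mul_apply, hGdef,
            Matrix.of_apply]
          apply Finset.sum_congr rfl; intro i _; ring
        rw [h1, hGA, hM]; rfl
      refine ⟨A, ?_, ?_⟩
      · -- constraint
        have hgeq : Aᵀ * G * A = gram P := by rw [gram_comb, hGdef]
        rw [hgeq]
        refine Matrix.PosSemidef.of_dotProduct_mulVec_nonneg (Matrix.IsHermitian.sub Matrix.isHermitian_one (gram_isHermitian P)) ?_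
        intro x
        have hx : star x = x := by simp
        rw [hx]
        set u : 𝓗 := ∑ j, x j • W j with hu
        set p : 𝓗 := ∑ j, x j • P j with hp
        have hq : x ⬝ᵥ ((1 : Matrix (Fin s) (Fin s) ℝ) - gram P) *ᵥ x
            = x ⬝ᵥ x - ⟪p, p⟫ := by
          rw [Matrix.sub_mulVec, dotProduct_sub, Matrix.one_mulVec, quad_gram]
        have hqW : x ⬝ᵥ ((1 : Matrix (Fin s) (Fin s) ℝ) - gram W) *ᵥ x
            = x ⬝ᵥ x - ⟪u, u⟫ := by
          rw [Matrix.sub_mulVec, dotProduct_sub, Matrix.one_mulVec, quad_gram]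
        have hWx : (0:ℝ) ≤ x ⬝ᵥ x - ⟪u, u⟫ := by
          have := hW.dotProduct_mulVec_nonneg x
          rw [show star x = x by simp] at this
          rw [hqW] at this; exact this
        have hvk : ∀ k, ⟪v k, u - p⟫ = (0:ℝ) := by
          intro k
          rw [inner_sub_right]
          simp only [hu, hp, inner_sum, real_inner_smul_right]
          rw [sub_eq_zero]
          apply Finset.sum_congr rfl; intro j _
          rw [hproj]
        have horth : ⟪p, u - p⟫ = (0:ℝ) := by
          rw [hp]
          simp only [sum_inner, real_inner_smul_left]
          apply Finset.sum_eq_zero; intro j _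
          rw [hP]
          simp only [sum_inner, real_inner_smul_left]
          rw [Finset.sum_eq_zero, mul_zero]
          intro i _
          rw [hvk, mul_zero]
        have hpu : ⟪p, p⟫ ≤ ⟪u, u⟫ := by
          have hdecomp : u = p + (u - p) := by abel
          have hexp : ⟪u, u⟫ = ⟪p, p⟫ + 2 * ⟪p, u - p⟫ + ⟪u - p, u - p⟫ := by
            conv_lhs => rw [hdecomp]
            exact real_inner_add_add_self p (u - p)
          have hnn : (0:ℝ) ≤ ⟪u - p, u - p⟫ := real_inner_self_nonneg
          rw [horth] at hexp
          linarith
        rw [hq]; linarith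
      · -- value
        have h1 : (Aᵀ * G * H).trace = (Mᵀ * H).trace := by rw [hAtG]
        rw [h1]
        have h2 : (Mᵀ * H).trace = ∑ j, ∑ i, M i j * H i j := by
          simp [Matrix.trace, Matrix.diag, Matrix.mul_apply, Matrix.transpose_apply]
        rw [h2]
        apply Finset.sum_congr rfl; intro j _
        simp only [sum_inner, real_inner_smul_left]
        apply Finset.sum_congr rfl; intro i _
        rw [hM]; simp only [Matrix.of_apply]; ring
    · rintro ⟨A, hA, rfl⟩
      refine ⟨fun j => ∑ i, A i j • v i, ?_, ?_⟩
      · rw [gram_comb, ← hGdef]; exact hA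
      · rw [value_comb, ← hGdef]
  exact congrArg sSup key
end

section
/- Let G ∈ ℝ^{n×n} be symmetric positive definite and define π : ℝ^{n×s} → ℝ by π(H) = Tr √(Hᵀ G H). If H ∈ ℝ^{n×s} is such that all eigenvalues of Hᵀ G H are positive (i.e. Hᵀ G H is positive definite), then π is Fréchet differentiable at H and its gradient (with respect to the Frobenius inner product) is ∇π(H) = G H (Hᵀ G H)^{−1/2}; equivalently, ∇π(H) = G H Uᵀ diag(1/√λ(Hᵀ G H)) U for any orthogonal U ∈ ℝ^{s×s} with Hᵀ G H = Uᵀ diag(λ(Hᵀ G H)) U. In other words, the Fréchet derivative of π at H applied to M ∈ ℝ^{n×s} equals Tr( Mᵀ G H (Hᵀ G H)^{−1/2} ). -/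
open scoped Matrix

attribute [local instance] Matrix.frobeniusNormedAddCommGroup Matrix.frobeniusNormedSpace

lemma transposeMulMul_posSemidef {n s : ℕ} {G : Matrix (Fin n) (Fin n) ℝ}
    (hG : G.PosSemidef) (H : Matrix (Fin n) (Fin s) ℝ) : (Hᵀ * G * H).PosSemidef := by
  simpa [Matrix.conjTranspose_eq_transpose_of_trivial] using hG.conjTranspose_mul_mul_same H

namespace Matrix.PosSemidef

open scoped ComplexOrder

/-- The square root of a positive semidefinite matrix, as defined in the older Mathlib. -/
noncomputable def sqrt {n 𝕜 : Type*} [Fintype n] [DecidableEq n] [RCLike 𝕜] {A : Matrix n n 𝕜}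
    (hA : A.PosSemidef) : Matrix n n 𝕜 :=
  hA.1.eigenvectorUnitary.1 * Matrix.diagonal ((↑) ∘ (√·) ∘ hA.1.eigenvalues) *
    (star hA.1.eigenvectorUnitary : Matrix n n 𝕜)

end Matrix.PosSemidef

/-- The objective `π(H) = Tr √(Hᵀ G H)` for a positive semidefinite matrix `G`. -/
noncomputable def piObj {n s : ℕ} (G : Matrix (Fin n) (Fin n) ℝ) (hG : G.PosSemidef) :
    Matrix (Fin n) (Fin s) ℝ → ℝ :=
  fun H => (transposeMulMul_posSemidef hG H).sqrt.trace

attribute [local instance] Matrix.frobeniusNormedRing Matrix.frobeniusNormedAlgebra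

theorem Matrix.PosSemidef.posSemidef_sqrt {m : Type*} [Fintype m] [DecidableEq m]
    {A : Matrix m m ℝ} (hA : A.PosSemidef) : hA.sqrt.PosSemidef := by
  unfold Matrix.PosSemidef.sqrt
  rw [Matrix.star_eq_conjTranspose]
  refine Matrix.PosSemidef.mul_mul_conjTranspose_same (Matrix.PosSemidef.diagonal ?_) _
  intro i
  simp [Real.sqrt_nonneg]

theorem Matrix.PosSemidef.sqrt_mul_self {m : Type*} [Fintype m] [DecidableEq m]
    {A : Matrix m m ℝ} (hA : A.PosSemidef) : hA.sqrt * hA.sqrt = A := by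
  conv_rhs => rw [hA.1.spectral_theorem, Unitary.conjStarAlgAut_apply]
  have hU : star (hA.1.eigenvectorUnitary : Matrix m m ℝ) * hA.1.eigenvectorUnitary = 1 :=
    Unitary.coe_star_mul_self _
  unfold Matrix.PosSemidef.sqrt
  rw [show ∀ (U D S : Matrix m m ℝ), U * D * S * (U * D * S) = U * (D * (S * U) * D) * S by
    intros; simp only [Matrix.mul_assoc]]
  rw [hU, Matrix.mul_one, Matrix.diagonal_mul_diagonal]
  congr 2
  congr 1
  funext i
  simp [Real.mul_self_sqrt (hA.eigenvalues_nonneg i)]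

section Helpers

set_option linter.unusedSectionVars false

variable {m k : Type*} [Fintype m] [DecidableEq m] [Fintype k] [DecidableEq k]

private lemma trace_nonneg' {A : Matrix m m ℝ} (hA : A.PosSemidef) : 0 ≤ A.trace := by
  refine Finset.sum_nonneg fun i _ => ?_
  simpa using hA.dotProduct_mulVec_nonneg (Pi.single i 1)

private lemma trace_mul_nonneg' {A B : Matrix m m ℝ} (hA : A.PosSemidef) (hB : B.PosSemidef) :
    0 ≤ (A * B).trace := by
  obtain ⟨C, rfl⟩ : ∃ C : Matrix m m ℝ, B = Cᴴ * C :=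
    ⟨hB.sqrt, by rw [hB.posSemidef_sqrt.1.eq, hB.sqrt_mul_self]⟩
  have h1 : A * (Cᴴ * C) = (A * Cᴴ) * C := by rw [Matrix.mul_assoc]
  rw [h1, Matrix.trace_mul_comm]
  have h2 : C * (A * Cᴴ) = C * A * Cᴴ := by rw [Matrix.mul_assoc]
  rw [h2]
  exact trace_nonneg' (hA.mul_mul_conjTranspose_same C)

private lemma trace_transpose_mul_mul_pos' {S : Matrix m m ℝ} (hS : S.PosDef)
    {E : Matrix m k ℝ} (hE : E ≠ 0) : 0 < (Eᵀ * S * E).trace := by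
  have hdiag : ∀ j, (Eᵀ * S * E) j j = (fun i => E i j) ⬝ᵥ S *ᵥ (fun i => E i j) := by
    intro j
    simp only [Matrix.mul_apply, Matrix.transpose_apply, dotProduct, Matrix.mulVec,
      Finset.sum_mul, Finset.mul_sum]
    rw [Finset.sum_comm]
    simp [mul_assoc]
  have hcols : ∃ j, (fun i => E i j) ≠ (0 : m → ℝ) := by
    by_contra h
    push_neg at h
    exact hE (Matrix.ext fun i j => by simpa using congrFun (h j) i)
  obtain ⟨j₀, hj₀⟩ := hcols
  rw [Matrix.trace]
  refine Finset.sum_pos' (fun j _ => ?_) ⟨j₀, Finset.mem_univ _, ?_⟩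
  · rw [Matrix.diag_apply, hdiag j]; simpa using hS.posSemidef.dotProduct_mulVec_nonneg (fun i => E i j)
  · rw [Matrix.diag_apply, hdiag j₀]; simpa using hS.dotProduct_mulVec_pos hj₀

private lemma posDef_sqrt' {A : Matrix m m ℝ} (hA : A.PosDef) : hA.posSemidef.sqrt.PosDef := by
  set T := hA.posSemidef.sqrt with hT
  have hpsd : T.PosSemidef := hA.posSemidef.posSemidef_sqrt
  refine Matrix.PosDef.of_dotProduct_mulVec_pos hpsd.1 fun x hx => ?_
  rcases lt_or_eq_of_le (hpsd.dotProduct_mulVec_nonneg x) with h | h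
  · exact h
  · exfalso
    have hTx : T *ᵥ x = 0 := (hpsd.dotProduct_mulVec_zero_iff x).mp h.symm
    have hAx : A *ᵥ x = 0 := by
      rw [← hA.posSemidef.sqrt_mul_self, ← Matrix.mulVec_mulVec, hTx, Matrix.mulVec_zero]
    have := hA.dotProduct_mulVec_pos hx
    rw [hAx, dotProduct_zero] at this
    exact lt_irrefl _ this

private lemma exists_sub_smul_one_posSemidef' {A : Matrix m m ℝ} (hA : A.PosDef) :
    ∃ μ : ℝ, 0 < μ ∧ (A - μ • 1).PosSemidef := by
  cases isEmpty_or_nonempty m with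
  | inl h =>
    exact ⟨1, one_pos, ⟨Matrix.ext fun i _ => isEmptyElim i, fun x => by
      rw [Finsupp.sum, Finset.eq_empty_of_isEmpty x.support, Finset.sum_empty]⟩⟩
  | inr h =>
    set μ := Finset.univ.inf' Finset.univ_nonempty hA.1.eigenvalues with hμdef
    have hμpos : 0 < μ := by
      obtain ⟨i, _, hi⟩ := Finset.exists_mem_eq_inf' Finset.univ_nonempty hA.1.eigenvalues
      rw [hμdef, hi]
      exact hA.eigenvalues_pos i
    refine ⟨μ, hμpos, ?_⟩
    have hspec := hA.1.spectral_theorem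
    rw [Unitary.conjStarAlgAut_apply] at hspec
    have hU : (hA.1.eigenvectorUnitary : Matrix m m ℝ) *
        star (hA.1.eigenvectorUnitary : Matrix m m ℝ) = 1 :=
      Matrix.mem_unitaryGroup_iff.mp hA.1.eigenvectorUnitary.2
    have h1 : (μ • 1 : Matrix m m ℝ) =
        (hA.1.eigenvectorUnitary : Matrix m m ℝ) * (μ • 1) *
          star (hA.1.eigenvectorUnitary : Matrix m m ℝ) := by
      rw [Matrix.mul_smul, Matrix.mul_one, Matrix.smul_mul, hU]
    have h2 : A - μ • 1 = (hA.1.eigenvectorUnitary : Matrix m m ℝ) *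
        (Matrix.diagonal (RCLike.ofReal ∘ hA.1.eigenvalues) - μ • 1) *
        star (hA.1.eigenvectorUnitary : Matrix m m ℝ) := by
      rw [Matrix.mul_sub, Matrix.sub_mul, ← h1, ← hspec]
    rw [h2]
    refine Matrix.PosSemidef.mul_mul_conjTranspose_same ?_ _
    have h3 : (Matrix.diagonal (RCLike.ofReal ∘ hA.1.eigenvalues) - μ • 1 : Matrix m m ℝ) =
        Matrix.diagonal (fun i => hA.1.eigenvalues i - μ) := by
      ext i j
      by_cases hij : i = j <;>
        simp [Matrix.diagonal_apply, Matrix.one_apply, hij, Matrix.sub_apply]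
    rw [h3]
    exact Matrix.PosSemidef.diagonal fun i => sub_nonneg.mpr (Finset.inf'_le _ (Finset.mem_univ i))

private lemma frob_norm_eq (D : Matrix m k ℝ) : ‖D‖ = Real.sqrt (∑ p : m × k, D p.1 p.2 ^ 2) := by
  rw [Matrix.frobenius_norm_def, Real.sqrt_eq_rpow, Fintype.sum_prod_type]
  congr 1
  refine Finset.sum_congr rfl fun i _ => Finset.sum_congr rfl fun j _ => ?_
  rw [show (2:ℝ) = ((2:ℕ):ℝ) by norm_num, Real.rpow_natCast, Real.norm_eq_abs, sq_abs]

private lemma trace_transpose_mul_eq (D B : Matrix m k ℝ) :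
    (Dᵀ * B).trace = ∑ p : m × k, D p.1 p.2 * B p.1 p.2 := by
  rw [Fintype.sum_prod_type, Matrix.trace]
  simp [Matrix.mul_apply]
  exact Finset.sum_comm

private lemma trace_transpose_mul_self_eq (D : Matrix m k ℝ) : (Dᵀ * D).trace = ‖D‖ ^ 2 := by
  rw [frob_norm_eq, Real.sq_sqrt (by positivity), trace_transpose_mul_eq]
  simp [sq]

private lemma trace_transpose_mul_le (D B : Matrix m k ℝ) : (Dᵀ * B).trace ≤ ‖D‖ * ‖B‖ := by
  rw [trace_transpose_mul_eq, frob_norm_eq, frob_norm_eq]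
  exact Real.sum_mul_le_sqrt_mul_sqrt _ _ _

private lemma sqrt_lipschitz {X Y : Matrix m m ℝ} (hX : X.PosSemidef) (hY : Y.PosSemidef)
    {μ : ℝ} (hμ : 0 < μ) (hsub : (hX.sqrt - μ • 1).PosSemidef) :
    ‖hY.sqrt - hX.sqrt‖ ≤ μ⁻¹ * ‖Y - X‖ := by
  set T := hX.sqrt with hTdef
  set S := hY.sqrt with hSdef
  set D := S - T with hDdef
  have hTps : T.PosSemidef := hX.posSemidef_sqrt
  have hSps : S.PosSemidef := hY.posSemidef_sqrt
  have hDsymm : Dᵀ = D := by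
    have h1 : Tᵀ = T := by
      rw [← Matrix.conjTranspose_eq_transpose_of_trivial]; exact hTps.1
    have h2 : Sᵀ = S := by
      rw [← Matrix.conjTranspose_eq_transpose_of_trivial]; exact hSps.1
    rw [hDdef, Matrix.transpose_sub, h1, h2]
  have hkey : D * T + S * D = Y - X := by
    rw [hDdef, Matrix.sub_mul, Matrix.mul_sub]
    rw [← hX.sqrt_mul_self, ← hY.sqrt_mul_self]
    abel
  have hDDps : (Dᵀ * D).PosSemidef := Matrix.posSemidef_conjTranspose_mul_self D
  have t1 : μ * ‖D‖ ^ 2 ≤ (Dᵀ * (D * T)).trace := by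
    have h0 : 0 ≤ ((Dᵀ * D) * (T - μ • 1)).trace := trace_mul_nonneg' hDDps hsub
    have hexp : (Dᵀ * D) * (T - μ • 1) = Dᵀ * (D * T) - μ • (Dᵀ * D) := by
      rw [Matrix.mul_sub, Matrix.mul_assoc]
      congr 1
      rw [Matrix.mul_smul, Matrix.mul_one]
    rw [hexp, Matrix.trace_sub, Matrix.trace_smul, sub_nonneg, smul_eq_mul,
      trace_transpose_mul_self_eq] at h0
    exact h0
  have t2 : 0 ≤ (Dᵀ * (S * D)).trace := by
    have h : Dᵀ * (S * D) = Dᵀ * S * D := by rw [Matrix.mul_assoc]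
    rw [h, Matrix.trace_mul_comm, ← Matrix.mul_assoc]
    have hDDt : (D * Dᵀ).PosSemidef := Matrix.posSemidef_self_mul_conjTranspose D
    exact trace_mul_nonneg' hDDt hSps
  have hsum : (Dᵀ * (Y - X)).trace = (Dᵀ * (D * T)).trace + (Dᵀ * (S * D)).trace := by
    rw [← hkey, Matrix.mul_add, Matrix.trace_add]
  have hlb : μ * ‖D‖ ^ 2 ≤ ‖D‖ * ‖Y - X‖ := by
    calc μ * ‖D‖ ^ 2 ≤ (Dᵀ * (D * T)).trace + (Dᵀ * (S * D)).trace := by linarith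
    _ = (Dᵀ * (Y - X)).trace := hsum.symm
    _ ≤ ‖D‖ * ‖Y - X‖ := trace_transpose_mul_le D (Y - X)
  rcases eq_or_lt_of_le (norm_nonneg D) with h0 | h0
  · rw [← h0]
    positivity
  · rw [le_inv_mul_iff₀ hμ]
    calc μ * ‖D‖ = μ * ‖D‖^2 / ‖D‖ := by field_simp [sq]
    _ ≤ ‖D‖ * ‖Y - X‖ / ‖D‖ := by gcongr
    _ = ‖Y - X‖ := by field_simp [mul_comm]

end Helpers

/-- If `Hᵀ G H` is positive definite, `π` is (Fréchet) differentiable at `H`, and its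
derivative applied to `M` is `Tr(Mᵀ G H (Hᵀ G H)^{-1/2})`, i.e. the gradient of `π` at `H`
w.r.t. the Frobenius inner product is `G H (Hᵀ G H)^{-1/2}`. -/
theorem piObj_differentiableAt {n s : ℕ} {G : Matrix (Fin n) (Fin n) ℝ} (hG : G.PosDef)
    (H : Matrix (Fin n) (Fin s) ℝ) (hH : (Hᵀ * G * H).PosDef) :
    DifferentiableAt ℝ (piObj G hG.posSemidef) H ∧
      ∀ M : Matrix (Fin n) (Fin s) ℝ,
        fderiv ℝ (piObj G hG.posSemidef) H M =
          (Mᵀ * (G * H * ((transposeMulMul_posSemidef hG.posSemidef H).sqrt)⁻¹)).trace := by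
  classical
  have hXpsd : (Hᵀ * G * H).PosSemidef := transposeMulMul_posSemidef hG.posSemidef H
  set X : Matrix (Fin s) (Fin s) ℝ := Hᵀ * G * H with hXdef
  set S₀ : Matrix (Fin s) (Fin s) ℝ := hXpsd.sqrt with hS0def
  have hS₀ : S₀.PosDef := posDef_sqrt' hH
  -- strict derivative of squaring at S₀
  set Dclm : Matrix (Fin s) (Fin s) ℝ →L[ℝ] Matrix (Fin s) (Fin s) ℝ :=
    S₀ • (ContinuousLinearMap.id ℝ (Matrix (Fin s) (Fin s) ℝ)) +
      (ContinuousLinearMap.id ℝ (Matrix (Fin s) (Fin s) ℝ)).smulRight S₀ with hDclmdef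
  have hDapp : ∀ E, Dclm E = S₀ * E + E * S₀ := by
    intro E
    show S₀ • E + E • S₀ = S₀ * E + E * S₀
    rw [smul_eq_mul, smul_eq_mul]
  have hg : HasStrictFDerivAt (fun S : Matrix (Fin s) (Fin s) ℝ => S * S) Dclm S₀ :=
    HasStrictFDerivAt.mul' (𝕜 := ℝ) (𝔸 := Matrix (Fin s) (Fin s) ℝ)
      (hasStrictFDerivAt_id S₀) (hasStrictFDerivAt_id S₀)
  -- the derivative as a continuous linear equivalence
  have hker : ∀ E : Matrix (Fin s) (Fin s) ℝ, S₀ * E + E * S₀ = 0 → E = 0 := by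
    intro E hE
    by_contra hne
    have h1 : 0 < (Eᵀ * S₀ * E).trace := trace_transpose_mul_mul_pos' hS₀ hne
    have h3 : (Eᵀ * (S₀ * E)).trace + (Eᵀ * (E * S₀)).trace = 0 := by
      rw [← Matrix.trace_add, ← Matrix.mul_add, hE, Matrix.mul_zero, Matrix.trace_zero]
    have h4 : (Eᵀ * (S₀ * E)).trace = (Eᵀ * S₀ * E).trace := by rw [Matrix.mul_assoc]
    have h5 : (Eᵀ * (E * S₀)).trace = ((Eᵀ * E) * S₀).trace := by rw [Matrix.mul_assoc]
    have h6 : 0 ≤ ((Eᵀ * E) * S₀).trace :=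
      trace_mul_nonneg' (Matrix.posSemidef_conjTranspose_mul_self E) hS₀.posSemidef
    linarith
  have hLinj : Function.Injective Dclm := by
    rw [injective_iff_map_eq_zero]
    intro E hE
    refine hker E ?_
    rw [← hDapp E]
    exact hE
  have hLbij : Function.Bijective Dclm.toLinearMap :=
    ⟨hLinj, LinearMap.injective_iff_surjective.mp hLinj⟩
  set eqv : Matrix (Fin s) (Fin s) ℝ ≃L[ℝ] Matrix (Fin s) (Fin s) ℝ :=
    (LinearEquiv.ofBijective Dclm.toLinearMap hLbij).toContinuousLinearEquiv with heqvdef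
  have hCLMeq : (eqv : Matrix (Fin s) (Fin s) ℝ →L[ℝ] Matrix (Fin s) (Fin s) ℝ) = Dclm := by
    ext E
    rfl
  have hg' : HasStrictFDerivAt (fun S : Matrix (Fin s) (Fin s) ℝ => S * S)
      (eqv : Matrix (Fin s) (Fin s) ℝ →L[ℝ] Matrix (Fin s) (Fin s) ℝ) S₀ := by
    rw [hCLMeq]; exact hg
  -- local inverse
  set f : Matrix (Fin s) (Fin s) ℝ → Matrix (Fin s) (Fin s) ℝ :=
    hg'.localInverse _ _ _ with hfdef
  have hgS₀ : S₀ * S₀ = X := hXpsd.sqrt_mul_self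
  have hfd : HasStrictFDerivAt f
      ((eqv.symm : Matrix (Fin s) (Fin s) ℝ →L[ℝ] Matrix (Fin s) (Fin s) ℝ)) X := by
    have h := hg'.to_localInverse
    rwa [hgS₀] at h
  -- derivative of q : H' ↦ H'ᵀ * G * H'
  have hb : IsBoundedBilinearMap ℝ
      (fun p : Matrix (Fin n) (Fin s) ℝ × Matrix (Fin n) (Fin s) ℝ => p.1ᵀ * G * p.2) := by
    refine ⟨fun x₁ x₂ y => ?_, fun c x y => ?_, fun x y₁ y₂ => ?_, fun c x y => ?_,
      ⟨‖G‖ + 1, by positivity, fun x y => ?_⟩⟩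
    · rw [Matrix.transpose_add, Matrix.add_mul, Matrix.add_mul]
    · rw [Matrix.transpose_smul, Matrix.smul_mul, Matrix.smul_mul]
    · rw [Matrix.mul_add]
    · rw [Matrix.mul_smul]
    · calc ‖xᵀ * G * y‖ ≤ ‖xᵀ * G‖ * ‖y‖ := Matrix.frobenius_norm_mul _ _
        _ ≤ ‖xᵀ‖ * ‖G‖ * ‖y‖ :=
          mul_le_mul_of_nonneg_right (Matrix.frobenius_norm_mul _ _) (norm_nonneg _)
        _ = ‖G‖ * ‖x‖ * ‖y‖ := by rw [Matrix.frobenius_norm_transpose]; ring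
        _ ≤ (‖G‖ + 1) * ‖x‖ * ‖y‖ := by
          have h1 : (0:ℝ) ≤ ‖x‖ * ‖y‖ := by positivity
          nlinarith
  set q : Matrix (Fin n) (Fin s) ℝ → Matrix (Fin s) (Fin s) ℝ :=
    fun H' => H'ᵀ * G * H' with hqdef
  set Dq : Matrix (Fin n) (Fin s) ℝ →L[ℝ] Matrix (Fin s) (Fin s) ℝ := (hb.deriv (H, H)).comp
    ((ContinuousLinearMap.id ℝ (Matrix (Fin n) (Fin s) ℝ)).prod
      (ContinuousLinearMap.id ℝ (Matrix (Fin n) (Fin s) ℝ))) with hDqdef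
  have hq : HasFDerivAt q Dq H := by
    have hdiag : HasFDerivAt (fun H' : Matrix (Fin n) (Fin s) ℝ => (H', H'))
        ((ContinuousLinearMap.id ℝ (Matrix (Fin n) (Fin s) ℝ)).prod
          (ContinuousLinearMap.id ℝ (Matrix (Fin n) (Fin s) ℝ))) H :=
      ((ContinuousLinearMap.id ℝ (Matrix (Fin n) (Fin s) ℝ)).prod
        (ContinuousLinearMap.id ℝ (Matrix (Fin n) (Fin s) ℝ))).hasFDerivAt
    exact HasFDerivAt.comp (f := fun H' : Matrix (Fin n) (Fin s) ℝ => (H', H')) H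
      (hb.hasFDerivAt (H, H)) hdiag
  have hDqM : ∀ M : Matrix (Fin n) (Fin s) ℝ, Dq M = Hᵀ * G * M + Mᵀ * G * H := by
    intro M
    show hb.deriv (H, H) (M, M) = _
    rw [hb.deriv_apply]
  -- the trace functional
  set tr : Matrix (Fin s) (Fin s) ℝ →L[ℝ] ℝ :=
    LinearMap.toContinuousLinearMap (Matrix.traceLinearMap (Fin s) ℝ ℝ) with htrdef
  -- ψ = trace ∘ f ∘ q, differentiable
  have hψ : HasFDerivAt (fun H' : Matrix (Fin n) (Fin s) ℝ => (f (q H')).trace)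
      (tr.comp ((eqv.symm : Matrix (Fin s) (Fin s) ℝ →L[ℝ] Matrix (Fin s) (Fin s) ℝ).comp Dq))
      H := by
    have h1 : HasFDerivAt f
        ((eqv.symm : Matrix (Fin s) (Fin s) ℝ →L[ℝ] Matrix (Fin s) (Fin s) ℝ)) (q H) :=
      hfd.hasFDerivAt
    have h2 : HasFDerivAt (fun Y : Matrix (Fin s) (Fin s) ℝ => Y.trace) tr (f (q H)) :=
      tr.hasFDerivAt
    exact (h2.comp (q H) h1).comp H hq
  -- eventual equality with piObj
  obtain ⟨μ, hμ, hsub⟩ := exists_sub_smul_one_posSemidef' hS₀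
  have hleftinv := hg'.eventually_left_inverse
  rw [Metric.eventually_nhds_iff] at hleftinv
  obtain ⟨ε, hε, hball⟩ := hleftinv
  have hcont : ContinuousAt q H := hq.differentiableAt.continuousAt
  have hev : ∀ᶠ H' in nhds H, ‖q H' - X‖ < μ * ε := by
    have hmem : Metric.ball X (μ * ε) ∈ nhds (q H) := Metric.ball_mem_nhds _ (by positivity)
    filter_upwards [hcont hmem] with H' hH'
    simpa [dist_eq_norm] using hH'
  have heq : piObj G hG.posSemidef =ᶠ[nhds H] fun H' => (f (q H')).trace := by
    filter_upwards [hev] with H' hH'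
    have hq'psd : (q H').PosSemidef := transposeMulMul_posSemidef hG.posSemidef H'
    have hsub' : (hXpsd.sqrt - μ • 1).PosSemidef := hsub
    have hlip : ‖hq'psd.sqrt - hXpsd.sqrt‖ ≤ μ⁻¹ * ‖q H' - X‖ :=
      sqrt_lipschitz hXpsd hq'psd hμ hsub'
    have hdist : dist hq'psd.sqrt S₀ < ε := by
      rw [dist_eq_norm]
      calc ‖hq'psd.sqrt - S₀‖ ≤ μ⁻¹ * ‖q H' - X‖ := hlip
        _ < μ⁻¹ * (μ * ε) := mul_lt_mul_of_pos_left hH' (by positivity)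
        _ = ε := by field_simp
    have h : f (hq'psd.sqrt * hq'psd.sqrt) = hq'psd.sqrt := hball hdist
    have h2 : f (q H') = hq'psd.sqrt := (congrArg f hq'psd.sqrt_mul_self.symm).trans h
    show (transposeMulMul_posSemidef hG.posSemidef H').sqrt.trace = (f (q H')).trace
    rw [h2]
  have hdiff : DifferentiableAt ℝ (piObj G hG.posSemidef) H :=
    hψ.differentiableAt.congr_of_eventuallyEq heq
  refine ⟨hdiff, fun M => ?_⟩
  rw [heq.fderiv_eq, hψ.fderiv]
  -- now compute the derivative
  have hdet : IsUnit S₀.det := Matrix.isUnit_iff_isUnit_det _ |>.mp hS₀.isUnit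
  have hWS : S₀⁻¹ * S₀ = 1 := Matrix.nonsing_inv_mul _ hdet
  have hSW : S₀ * S₀⁻¹ = 1 := Matrix.mul_nonsing_inv _ hdet
  set F : Matrix (Fin s) (Fin s) ℝ := eqv.symm (Dq M) with hFdef
  have hF : S₀ * F + F * S₀ = Dq M := by
    have h := eqv.apply_symm_apply (Dq M)
    rw [← hDapp F]
    exact h
  have h2tr : (S₀⁻¹ * (Dq M)).trace = 2 * F.trace := by
    rw [← hF, Matrix.mul_add, Matrix.trace_add]
    have a1 : S₀⁻¹ * (S₀ * F) = F := by rw [← Matrix.mul_assoc, hWS, Matrix.one_mul]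
    have a2 : (S₀⁻¹ * (F * S₀)).trace = F.trace := by
      calc (S₀⁻¹ * (F * S₀)).trace = ((S₀⁻¹ * F) * S₀).trace := by rw [Matrix.mul_assoc]
        _ = (S₀ * (S₀⁻¹ * F)).trace := Matrix.trace_mul_comm _ _
        _ = F.trace := by rw [← Matrix.mul_assoc, hSW, Matrix.one_mul]
    rw [a1, a2]; ring
  have hGt : Gᵀ = G := by
    rw [← Matrix.conjTranspose_eq_transpose_of_trivial]; exact hG.1
  have hS₀t : S₀ᵀ = S₀ := by
    rw [← Matrix.conjTranspose_eq_transpose_of_trivial]; exact hS₀.1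
  have hWt : (S₀⁻¹)ᵀ = S₀⁻¹ := by rw [Matrix.transpose_nonsing_inv, hS₀t]
  have htr2 : (S₀⁻¹ * (Dq M)).trace = 2 * (Mᵀ * (G * H * S₀⁻¹)).trace := by
    rw [hDqM M, Matrix.mul_add, Matrix.trace_add]
    have b1 : (S₀⁻¹ * (Mᵀ * G * H)).trace = (Mᵀ * (G * H * S₀⁻¹)).trace := by
      rw [Matrix.trace_mul_comm]
      congr 1
      simp only [Matrix.mul_assoc]
    have b2 : (S₀⁻¹ * (Hᵀ * G * M)).trace = (Mᵀ * (G * H * S₀⁻¹)).trace := by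
      rw [← Matrix.trace_transpose (S₀⁻¹ * (Hᵀ * G * M))]
      congr 1
      rw [Matrix.transpose_mul, Matrix.transpose_mul, Matrix.transpose_mul, hWt, hGt,
        Matrix.transpose_transpose]
      simp only [Matrix.mul_assoc]
    rw [b2, b1]; ring
  have hfinal : F.trace = (Mᵀ * (G * H * S₀⁻¹)).trace := by linarith
  show tr ((eqv.symm : Matrix (Fin s) (Fin s) ℝ →L[ℝ] Matrix (Fin s) (Fin s) ℝ) (Dq M)) = _
  exact hfinal
end

section
/- Let 𝓗 be a real Hilbert space, v₁,…,vₙ ∈ 𝓗 with positive definite Gram matrix G ∈ ℝ^{n×n}, G_{ij} = ⟨vᵢ, vⱼ⟩, and let s ≤ n. Then the supremum of (1/2) Σ_{i=1}^n Σ_{j=1}^s ⟨vᵢ, wⱼ⟩² over all W = (w₁,…,wₛ) ∈ 𝓗ˢ with Gram matrix 𝒢(W) ⪯ I_s equals (1/2) Σ_{i=1}^s λᵢ(G), where λ₁(G) ≥ … ≥ λₙ(G) are the eigenvalues of G ordered decreasingly. (This is the optimal value of the kernel PCA variance-maximization problem with s components.) -/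
private lemma sum_if_castLE {n s : ℕ} (hs : s ≤ n) (f : Fin n → ℝ) :
    ∑ i : Fin n, (if (i : ℕ) < s then f i else 0) = ∑ j : Fin s, f (Fin.castLE hs j) := by
  rw [← Finset.sum_filter]
  rw [show Finset.filter (fun i : Fin n => (i : ℕ) < s) Finset.univ
      = Finset.map (Fin.castLEEmb hs) Finset.univ from ?_, Finset.sum_map]
  · rfl
  · ext i
    simp only [Finset.mem_filter, Finset.mem_univ, true_and, Finset.mem_map, Fin.castLEEmb,
      Function.Embedding.coeFn_mk]
    constructor
    · intro h; exact ⟨⟨(i : ℕ), h⟩, rfl⟩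
    · rintro ⟨j, rfl⟩; exact j.2

private lemma sum_lam_mul_le {n s : ℕ} (hs : s ≤ n) (hs1 : 1 ≤ s) (lam t : Fin n → ℝ)
    (hdec : Antitone lam) (hnn : ∀ i, 0 ≤ lam i)
    (ht0 : ∀ i, 0 ≤ t i) (ht1 : ∀ i, t i ≤ 1) (hts : ∑ i, t i ≤ (s : ℝ)) :
    ∑ i, lam i * t i ≤ ∑ j : Fin s, lam (Fin.castLE hs j) := by
  set m : Fin n := ⟨s - 1, by omega⟩ with hm
  have key : ∀ i : Fin n, lam i * t i ≤
      (if (i : ℕ) < s then lam i else 0) + lam m * (t i - (if (i : ℕ) < s then 1 else 0)) := by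
    intro i
    by_cases h : (i : ℕ) < s
    · simp only [if_pos h]
      have h1 : lam m ≤ lam i := hdec (by simp only [Fin.le_def, hm]; omega)
      nlinarith [ht1 i, ht0 i]
    · simp only [if_neg h]
      have h1 : lam i ≤ lam m := hdec (by simp only [Fin.le_def, hm]; omega)
      nlinarith [ht0 i]
  have hcount : ∑ i : Fin n, (if (i : ℕ) < s then (1 : ℝ) else 0) = (s : ℝ) := by
    rw [sum_if_castLE hs (fun _ => (1 : ℝ))]; simp
  calc ∑ i, lam i * t i
      ≤ ∑ i : Fin n, ((if (i : ℕ) < s then lam i else 0)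
          + lam m * (t i - (if (i : ℕ) < s then 1 else 0))) :=
        Finset.sum_le_sum fun i _ => key i
    _ = ∑ j : Fin s, lam (Fin.castLE hs j) + lam m * (∑ i, t i - (s : ℝ)) := by
        rw [Finset.sum_add_distrib, sum_if_castLE hs, ← Finset.mul_sum, Finset.sum_sub_distrib,
          hcount]
    _ ≤ ∑ j : Fin s, lam (Fin.castLE hs j) := by nlinarith [hnn m]


open scoped RealInnerProductSpace Matrix

/-- Optimal value of the KPCA variance-maximization problem:
`sup { (1/2) Σᵢⱼ ⟨vᵢ, wⱼ⟩² : 𝒢(W) ⪯ Iₛ } = (1/2) Σ_{i=1}^s λᵢ(G)`, where the `λᵢ(G)` are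
the decreasingly ordered eigenvalues of the Gram matrix `G` of `v₁, …, vₙ`. -/
theorem kpca_optimal_value
    {𝓗 : Type*} [NormedAddCommGroup 𝓗] [InnerProductSpace ℝ 𝓗]
    {n s : ℕ} (hs : s ≤ n) (v : Fin n → 𝓗)
    (G : Matrix (Fin n) (Fin n) ℝ) (hGdef : G = Matrix.of fun i j => ⟪v i, v j⟫)
    (hG : G.PosDef)
    (u : Fin n → (Fin n → ℝ)) (lam : Fin n → ℝ)
    (horth : ∀ i k : Fin n, u i ⬝ᵥ u k = if i = k then (1 : ℝ) else 0)
    (heig : ∀ i : Fin n, G *ᵥ u i = lam i • u i)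
    (hdec : Antitone lam) :
    (⨆ W : {W : Fin s → 𝓗 // ((1 : Matrix (Fin s) (Fin s) ℝ) - gram W).PosSemidef},
        (1 / 2) * ∑ i : Fin n, ∑ j : Fin s, (⟪v i, (W : Fin s → 𝓗) j⟫ : ℝ) ^ 2)
      = (1 / 2) * ∑ j : Fin s, lam (Fin.castLE hs j) := by
  
  classical
  -- eigenvalues are positive
  have hlam_pos : ∀ i, 0 < lam i := by
    intro i
    have hu : u i ≠ 0 := by
      intro h
      have h1 := horth i i
      rw [h] at h1
      simp at h1
    have h2 := hG.dotProduct_mulVec_pos hu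
    rw [heig i] at h2
    have h3 : u i ⬝ᵥ (lam i • u i) = lam i := by
      have h4 : u i ⬝ᵥ (lam i • u i) = lam i * (u i ⬝ᵥ u i) := by
        simp only [dotProduct, Pi.smul_apply, smul_eq_mul, Finset.mul_sum]
        exact Finset.sum_congr rfl fun k _ => by ring
      rw [h4, horth i i]
      simp
    rw [star_trivial, h3] at h2
    exact h2
  set e : Fin n → 𝓗 := fun i => (Real.sqrt (lam i))⁻¹ • ∑ k, u i k • v k with he
  have he_apply : ∀ i, e i = (Real.sqrt (lam i))⁻¹ • ∑ k, u i k • v k := fun i => rfl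
  have hsqrt_pos : ∀ i, 0 < Real.sqrt (lam i) := fun i => Real.sqrt_pos.mpr (hlam_pos i)
  have hsq : ∀ i, Real.sqrt (lam i) * Real.sqrt (lam i) = lam i :=
    fun i => Real.mul_self_sqrt (hlam_pos i).le
  have hGv : ∀ k i, (G *ᵥ u i) k = ⟪v k, ∑ l, u i l • v l⟫ := by
    intro k i
    rw [inner_sum]
    simp only [real_inner_smul_right]
    rw [hGdef]
    simp only [Matrix.mulVec, dotProduct, Matrix.of_apply]
    exact Finset.sum_congr rfl fun l _ => by ring
  have hvk_e : ∀ k i, ⟪v k, e i⟫ = Real.sqrt (lam i) * u i k := by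
    intro k i
    rw [he_apply i, real_inner_smul_right, ← hGv k i, heig i]
    simp only [Pi.smul_apply, smul_eq_mul]
    rw [inv_mul_eq_iff_eq_mul₀ (hsqrt_pos i).ne', ← mul_assoc, hsq i]
  have he_inner : ∀ i j, ⟪e i, e j⟫ = if i = j then (1 : ℝ) else 0 := by
    intro i j
    conv_lhs => rw [he_apply i]
    rw [real_inner_smul_left, sum_inner]
    simp only [real_inner_smul_left, hvk_e]
    have hsum : ∑ k, u i k * (Real.sqrt (lam j) * u j k)
        = Real.sqrt (lam j) * (if i = j then (1 : ℝ) else 0) := by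
      rw [← horth i j]
      simp only [dotProduct, Finset.mul_sum]
      exact Finset.sum_congr rfl fun k _ => by ring
    rw [hsum]
    by_cases hij : i = j
    · subst hij
      rw [if_pos rfl, mul_one, inv_mul_cancel₀ (hsqrt_pos i).ne']
    · simp [hij]
  have he_on : Orthonormal ℝ e := orthonormal_iff_ite.mpr he_inner
  have he_norm : ∀ i, ‖e i‖ = 1 := he_on.1
  -- columns of u are orthonormal
  have hcol : ∀ k l, ∑ i : Fin n, u i k * u i l = if k = l then (1 : ℝ) else 0 := by
    have hUU : (Matrix.of u) * (Matrix.of u)ᵀ = 1 := by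
      ext i j
      rw [Matrix.mul_apply]
      simp only [Matrix.transpose_apply, Matrix.of_apply, Matrix.one_apply]
      rw [← horth i j]
      rfl
    have hUU2 := mul_eq_one_comm.mp hUU
    intro k l
    have h := congrFun (congrFun hUU2 k) l
    rw [Matrix.mul_apply] at h
    simp only [Matrix.transpose_apply, Matrix.of_apply, Matrix.one_apply] at h
    exact h
  -- decomposition of v in terms of e
  have hv_dec : ∀ k, v k = ∑ i, (Real.sqrt (lam i) * u i k) • e i := by
    intro k
    have step : ∀ i : Fin n, (Real.sqrt (lam i) * u i k) • e i = ∑ l, (u i k * u i l) • v l := by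
      intro i
      rw [he_apply i, smul_smul, Finset.smul_sum]
      refine Finset.sum_congr rfl fun l _ => ?_
      rw [smul_smul]
      congr 1
      rw [mul_comm (Real.sqrt (lam i)) (u i k), mul_assoc (u i k),
        mul_inv_cancel₀ (hsqrt_pos i).ne', mul_one]
    rw [Finset.sum_congr rfl fun i _ => step i, Finset.sum_comm]
    simp only [← Finset.sum_smul]
    rw [Finset.sum_congr rfl fun l _ => by rw [hcol k l]]
    simp [ite_smul]
  -- key objective identity
  have hobj : ∀ w : 𝓗, ∑ k, (⟪v k, w⟫ : ℝ) ^ 2 = ∑ i, lam i * ⟪e i, w⟫ ^ 2 := by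
    intro w
    have hv_in : ∀ k, (⟪v k, w⟫ : ℝ) = ∑ i, (Real.sqrt (lam i) * u i k) * ⟪e i, w⟫ := by
      intro k
      conv_lhs => rw [hv_dec k]
      rw [sum_inner]
      simp only [real_inner_smul_left]
    calc ∑ k, (⟪v k, w⟫ : ℝ) ^ 2
        = ∑ k, ∑ i, ∑ j, (Real.sqrt (lam i) * ⟪e i, w⟫) * (Real.sqrt (lam j) * ⟪e j, w⟫)
            * (u i k * u j k) := by
          refine Finset.sum_congr rfl fun k _ => ?_
          rw [hv_in k, sq, Finset.sum_mul_sum]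
          exact Finset.sum_congr rfl fun i _ => Finset.sum_congr rfl fun j _ => by ring
      _ = ∑ i, ∑ j, (Real.sqrt (lam i) * ⟪e i, w⟫) * (Real.sqrt (lam j) * ⟪e j, w⟫)
            * (if i = j then (1 : ℝ) else 0) := by
          rw [Finset.sum_comm]
          refine Finset.sum_congr rfl fun i _ => ?_
          rw [Finset.sum_comm]
          refine Finset.sum_congr rfl fun j _ => ?_
          rw [← Finset.mul_sum, ← horth i j]
          rfl
      _ = ∑ i, lam i * ⟪e i, w⟫ ^ 2 := by
          refine Finset.sum_congr rfl fun i _ => ?_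
          rw [Finset.sum_eq_single i]
          · rw [if_pos rfl, mul_one]
            linear_combination (⟪e i, w⟫ : ℝ) ^ 2 * hsq i
          · intro b _ hb
            rw [if_neg fun h => hb h.symm, mul_zero]
          · intro h
            exact absurd (Finset.mem_univ i) h
  -- quadratic form of the gram matrix
  have hq : ∀ (W : Fin s → 𝓗) (x : Fin s → ℝ),
      x ⬝ᵥ ((gram W) *ᵥ x) = ‖∑ j, x j • W j‖ ^ 2 := by
    intro W x
    rw [← real_inner_self_eq_norm_sq, sum_inner]
    simp only [real_inner_smul_left, inner_sum, real_inner_smul_right]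
    simp only [dotProduct, Matrix.mulVec, Matrix.of_apply, gram, Finset.mul_sum]
    refine Finset.sum_congr rfl fun j _ => Finset.sum_congr rfl fun k _ => by ring
  have hWle : ∀ (W : Fin s → 𝓗),
      ((1 : Matrix (Fin s) (Fin s) ℝ) - gram W).PosSemidef →
      ∀ x : Fin s → ℝ, ‖∑ j, x j • W j‖ ^ 2 ≤ ∑ j, x j ^ 2 := by
    intro W hW x
    have h1 := hW.dotProduct_mulVec_nonneg x
    rw [star_trivial, Matrix.sub_mulVec, dotProduct_sub, Matrix.one_mulVec] at h1
    have h2 : x ⬝ᵥ x = ∑ j, x j ^ 2 := by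
      simp only [dotProduct, sq]
    rw [hq W x] at h1
    linarith [h1, h2.symm ▸ h1]
  -- the upper bound
  have hbound : ∀ W : Fin s → 𝓗, ((1 : Matrix (Fin s) (Fin s) ℝ) - gram W).PosSemidef →
      ∑ i : Fin n, ∑ j : Fin s, (⟪v i, W j⟫ : ℝ) ^ 2 ≤ ∑ j : Fin s, lam (Fin.castLE hs j) := by
    intro W hW
    rcases Nat.eq_zero_or_pos s with hs0 | hs1
    · subst hs0
      simp
    set t : Fin n → ℝ := fun i => ∑ j, (⟪e i, W j⟫ : ℝ) ^ 2 with ht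
    have hobj' : ∑ i : Fin n, ∑ j : Fin s, (⟪v i, W j⟫ : ℝ) ^ 2 = ∑ i, lam i * t i := by
      rw [Finset.sum_comm]
      calc ∑ j : Fin s, ∑ i : Fin n, (⟪v i, W j⟫ : ℝ) ^ 2
          = ∑ j : Fin s, ∑ i : Fin n, lam i * (⟪e i, W j⟫ : ℝ) ^ 2 :=
            Finset.sum_congr rfl fun j _ => hobj (W j)
        _ = ∑ i, lam i * t i := by
            rw [Finset.sum_comm]
            exact Finset.sum_congr rfl fun i _ => by rw [ht, Finset.mul_sum]
    rw [hobj']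
    have ht0 : ∀ i, 0 ≤ t i := fun i => Finset.sum_nonneg fun j _ => sq_nonneg _
    have ht1 : ∀ i, t i ≤ 1 := by
      intro i
      set x : Fin s → ℝ := fun j => (⟪e i, W j⟫ : ℝ) with hx
      have hxx : ∑ j, x j ^ 2 = t i := rfl
      have hti : (⟪e i, ∑ j, x j • W j⟫ : ℝ) = t i := by
        rw [inner_sum]
        simp only [real_inner_smul_right]
        exact Finset.sum_congr rfl fun j _ => by rw [hx, sq]
      have hcs : (⟪e i, ∑ j, x j • W j⟫ : ℝ) ^ 2 ≤ ‖∑ j, x j • W j‖ ^ 2 := by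
        have := abs_real_inner_le_norm (e i) (∑ j, x j • W j)
        rw [he_norm i, one_mul] at this
        calc (⟪e i, ∑ j, x j • W j⟫ : ℝ) ^ 2 = |(⟪e i, ∑ j, x j • W j⟫ : ℝ)| ^ 2 := (sq_abs _).symm
          _ ≤ ‖∑ j, x j • W j‖ ^ 2 := by
              have h0 : (0:ℝ) ≤ |(⟪e i, ∑ j, x j • W j⟫ : ℝ)| := abs_nonneg _
              nlinarith [this]
      have h2 := hWle W hW x
      rw [hxx] at h2
      rw [hti] at hcs
      nlinarith [ht0 i]
    have hdiag : ∀ j : Fin s, ‖W j‖ ^ 2 ≤ 1 := by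
      intro j
      have h2 := hWle W hW (Pi.single j 1)
      have h3 : ∑ k, (Pi.single j 1 : Fin s → ℝ) k • W k = W j := by
        rw [Finset.sum_eq_single j]
        · simp
        · intro b _ hb
          simp [Pi.single_eq_of_ne hb]
        · intro h
          exact absurd (Finset.mem_univ j) h
      have h4 : ∑ k, ((Pi.single j 1 : Fin s → ℝ) k) ^ 2 = 1 := by
        rw [Finset.sum_eq_single j]
        · simp
        · intro b _ hb
          simp [Pi.single_eq_of_ne hb]
        · intro h
          exact absurd (Finset.mem_univ j) h
      rw [h3, h4] at h2
      exact h2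
    have hts : ∑ i, t i ≤ (s : ℝ) := by
      have h1 : ∑ i, t i = ∑ j : Fin s, ∑ i : Fin n, (⟪e i, W j⟫ : ℝ) ^ 2 := Finset.sum_comm
      rw [h1]
      calc ∑ j : Fin s, ∑ i : Fin n, (⟪e i, W j⟫ : ℝ) ^ 2
          ≤ ∑ j : Fin s, ‖W j‖ ^ 2 := by
            refine Finset.sum_le_sum fun j _ => ?_
            have := he_on.sum_inner_products_le (W j) (s := Finset.univ)
            calc ∑ i : Fin n, (⟪e i, W j⟫ : ℝ) ^ 2
                = ∑ i : Fin n, ‖(⟪e i, W j⟫ : ℝ)‖ ^ 2 := by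
                  exact Finset.sum_congr rfl fun i _ => by
                    rw [Real.norm_eq_abs, sq_abs]
              _ ≤ ‖W j‖ ^ 2 := this
        _ ≤ ∑ j : Fin s, (1 : ℝ) := Finset.sum_le_sum fun j _ => hdiag j
        _ = (s : ℝ) := by simp
    exact sum_lam_mul_le hs hs1 lam t hdec (fun i => (hlam_pos i).le) ht0 ht1 hts
  -- the maximizer
  have hW0mem : ((1 : Matrix (Fin s) (Fin s) ℝ)
      - gram (fun j => e (Fin.castLE hs j))).PosSemidef := by
    have hg : gram (fun j => e (Fin.castLE hs j)) = 1 := by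
      ext j k
      simp only [gram, Matrix.of_apply, he_inner, Matrix.one_apply]
      congr 1
      simp [Fin.castLE_inj]
    rw [hg, sub_self]
    exact Matrix.PosSemidef.zero
  have hW0val : ∑ i : Fin n, ∑ j : Fin s, (⟪v i, e (Fin.castLE hs j)⟫ : ℝ) ^ 2
      = ∑ j : Fin s, lam (Fin.castLE hs j) := by
    rw [Finset.sum_comm]
    refine Finset.sum_congr rfl fun j _ => ?_
    have hterm : ∀ i : Fin n, (⟪v i, e (Fin.castLE hs j)⟫ : ℝ) ^ 2
        = lam (Fin.castLE hs j) * (u (Fin.castLE hs j) i * u (Fin.castLE hs j) i) := by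
      intro i
      rw [hvk_e]
      linear_combination (u (Fin.castLE hs j) i) ^ 2 * hsq (Fin.castLE hs j)
    rw [Finset.sum_congr rfl fun i _ => hterm i, ← Finset.mul_sum]
    have h1 := horth (Fin.castLE hs j) (Fin.castLE hs j)
    rw [if_pos rfl] at h1
    simp only [dotProduct] at h1
    rw [h1, mul_one]
  -- conclude
  set W0 : {W : Fin s → 𝓗 // ((1 : Matrix (Fin s) (Fin s) ℝ) - gram W).PosSemidef} :=
    ⟨fun j => e (Fin.castLE hs j), hW0mem⟩ with hW0
  haveI : Nonempty {W : Fin s → 𝓗 // ((1 : Matrix (Fin s) (Fin s) ℝ) - gram W).PosSemidef} :=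
    ⟨W0⟩
  apply le_antisymm
  · apply ciSup_le
    intro W
    have := hbound W.1 W.2
    linarith
  · have hb : BddAbove (Set.range fun W :
        {W : Fin s → 𝓗 // ((1 : Matrix (Fin s) (Fin s) ℝ) - gram W).PosSemidef} =>
        (1 / 2) * ∑ i : Fin n, ∑ j : Fin s, (⟪v i, (W : Fin s → 𝓗) j⟫ : ℝ) ^ 2) := by
      refine ⟨(1 / 2) * ∑ j : Fin s, lam (Fin.castLE hs j), ?_⟩
      rintro x ⟨W, rfl⟩
      have := hbound W.1 W.2
      simp only
      linarith
    have hle := le_ciSup hb W0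
    have hval : (1 / 2) * ∑ i : Fin n, ∑ j : Fin s, (⟪v i, (W0 : Fin s → 𝓗) j⟫ : ℝ) ^ 2
        = (1 / 2) * ∑ j : Fin s, lam (Fin.castLE hs j) := by
      rw [hW0]
      simp only
      rw [hW0val]
    rw [hval] at hle
    exact hle
end
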